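/- arXiv:2512.10599 — 3 statements merged into one kernel-verified Lean document; each statement's English description precedes it below -/
import Mathlib

section
/- Let P be a poset, {↑F_d : d ∈ D} a filtered family of nonempty upper sets of P, and U ⊆ P an upper set. If F_d ⊄ U for every d ∈ D, then the family {↑(F_d \ U) : d ∈ D} is filtered. -/
/-- If `{↑F_d}` is a filtered family of nonempty upper sets, `U` is an
upper set and `F_d ⊄ U` for each `d`, then `{↑(F_d \ U)}` is filtered. -/
theorem filtered_diff_upperSet {P : Type*} [PartialOrder P] {D : Type*} [Nonempty D]
    (F : D → Set P) (U : Set P) (hU : IsUpperSet U)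
    (hne : ∀ d, (F d).Nonempty)
    (hfil : ∀ d₁ d₂ : D, ∃ d₃ : D,
      (upperClosure (F d₃) : Set P) ⊆
        (upperClosure (F d₁) : Set P) ∩ (upperClosure (F d₂) : Set P))
    (hnsub : ∀ d, ¬ F d ⊆ U) :
    ∀ d₁ d₂ : D, ∃ d₃ : D,
      (upperClosure (F d₃ \ U) : Set P) ⊆
        (upperClosure (F d₁ \ U) : Set P) ∩ (upperClosure (F d₂ \ U) : Set P) := by
  intro d₁ d₂
  obtain ⟨d₃, h₃⟩ := hfil d₁ d₂
  refine ⟨d₃, fun x hx => ?_⟩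
  obtain ⟨y, ⟨hyF, hyU⟩, hyx⟩ := hx
  have key : ∀ d : D, (upperClosure (F d₃) : Set P) ⊆ (upperClosure (F d) : Set P) →
      x ∈ (upperClosure (F d \ U) : Set P) := by
    intro d hsub
    obtain ⟨z, hzF, hzy⟩ := hsub ⟨y, hyF, le_refl y⟩
    exact ⟨z, ⟨hzF, fun hzU => hyU (hU hzy hzU)⟩, hzy.trans hyx⟩
  exact ⟨key d₁ (fun a ha => (h₃ ha).1), key d₂ (fun a ha => (h₃ ha).2)⟩
end

section
/- Every strong R-space is strongly well-filtered. -/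
/-- A subset of a topological space is saturated if it equals the intersection of
the open sets containing it. -/
def IsSaturatedSet {X : Type*} [TopologicalSpace X] (A : Set X) : Prop :=
  A = ⋂₀ {U : Set X | IsOpen U ∧ A ⊆ U}

/-- A T₀-space is a strong R-space. -/
def StrongRSpace (X : Type*) [TopologicalSpace X] : Prop :=
  ∀ S : Set (Set X), S.Nonempty →
    (∀ K ∈ S, K.Nonempty ∧ IsCompact K ∧ IsSaturatedSet K) →
    ∀ U : Set X, IsOpen U → ⋂₀ S ⊆ U →
      ∃ T : Finset (Set X), T.Nonempty ∧ ↑T ⊆ S ∧ ⋂₀ (T : Set (Set X)) ⊆ U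

/-- A T₀-space is strongly well-filtered. -/
def StronglyWellFiltered (X : Type*) [TopologicalSpace X] : Prop :=
  ∀ S : Set (Set X), S.Nonempty →
    (∀ K ∈ S, K.Nonempty ∧ IsCompact K ∧ IsSaturatedSet K) →
    (∀ K₁ ∈ S, ∀ K₂ ∈ S, ∃ K₃ ∈ S, K₃ ⊆ K₁ ∩ K₂) →
    ∀ K : Set X, K.Nonempty → IsCompact K → IsSaturatedSet K →
    ∀ U : Set X, IsOpen U → ⋂₀ S ∩ K ⊆ U →
      ∃ Kd ∈ S, Kd ∩ K ⊆ U

open Classical in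
lemma filtered_finset_lb {X : Type*} (S : Set (Set X))
    (hdir : ∀ K₁ ∈ S, ∀ K₂ ∈ S, ∃ K₃ ∈ S, K₃ ⊆ K₁ ∩ K₂) :
    ∀ T : Finset (Set X), T.Nonempty → ↑T ⊆ S → ∃ Kd ∈ S, Kd ⊆ ⋂₀ (T : Set (Set X)) := by
  intro T
  induction T using Finset.induction with
  | empty => intro hne; exact absurd rfl hne.ne_empty
  | @insert A T hA ih =>
    intro _ hsub
    have hAS : A ∈ S := hsub (Finset.mem_insert_self _ _)
    rcases T.eq_empty_or_nonempty with rfl | hTne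
    · exact ⟨A, hAS, by simp⟩
    · obtain ⟨Kd, hKd, hle⟩ := ih hTne (fun B hB => hsub (Finset.mem_insert_of_mem hB))
      obtain ⟨K₃, hK₃, hle₃⟩ := hdir Kd hKd A hAS
      refine ⟨K₃, hK₃, ?_⟩
      rw [Finset.coe_insert, Set.sInter_insert]
      exact Set.subset_inter (hle₃.trans (Set.inter_subset_right))
        ((hle₃.trans Set.inter_subset_left).trans hle)

/-- Every strong R-space is strongly well-filtered. -/
theorem strongRSpace_stronglyWellFiltered {X : Type*} [TopologicalSpace X] [T0Space X]
    (h : StrongRSpace X) : StronglyWellFiltered X := by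
  intro S hSne hScs hdir K hKne hKc hKs U hU hsub
  classical
  have hScs' : ∀ A ∈ insert K S, A.Nonempty ∧ IsCompact A ∧ IsSaturatedSet A := by
    rintro A (rfl | hA)
    · exact ⟨hKne, hKc, hKs⟩
    · exact hScs A hA
  have hsub' : ⋂₀ insert K S ⊆ U := by
    rw [Set.sInter_insert]
    exact (Set.inter_comm K (⋂₀ S)) ▸ hsub
  obtain ⟨T, hTne, hTsub, hTU⟩ :=
    h (insert K S) ⟨K, Set.mem_insert _ _⟩ hScs' U hU hsub'
  set Ts : Finset (Set X) := T.filter (fun A => A ∈ S) with hTs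
  have hTsS : ↑Ts ⊆ S := fun A hA => (Finset.mem_filter.mp hA).2
  have hKey : ⋂₀ (Ts : Set (Set X)) ∩ K ⊆ ⋂₀ (T : Set (Set X)) := by
    intro x hx A hA
    rcases hTsub hA with rfl | hAS
    · exact hx.2
    · exact hx.1 A (Finset.mem_filter.mpr ⟨hA, hAS⟩)
  rcases Ts.eq_empty_or_nonempty with hTsE | hTsne
  · obtain ⟨Kd, hKd⟩ := hSne
    refine ⟨Kd, hKd, fun x hx => hTU ?_⟩
    intro A hA
    rcases hTsub hA with rfl | hAS
    · exact hx.2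
    · have hmem : A ∈ Ts := Finset.mem_filter.mpr ⟨hA, hAS⟩
      rw [hTsE] at hmem
      exact absurd hmem (Finset.notMem_empty A)
  · obtain ⟨Kd, hKd, hle⟩ := filtered_finset_lb S hdir Ts hTsne hTsS
    exact ⟨Kd, hKd, fun x hx => hTU (hKey ⟨hle hx.1, hx.2⟩)⟩
end

section
/- Every coherent well-filtered T₀-space is a strong R-space. -/
/-- A space is coherent if the intersection of any two compact saturated sets
is compact. -/
def CoherentSpace (X : Type*) [TopologicalSpace X] : Prop :=
  ∀ K₁ K₂ : Set X, IsCompact K₁ → IsSaturatedSet K₁ → IsCompact K₂ → IsSaturatedSet K₂ →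
    IsCompact (K₁ ∩ K₂)

/-- A space is well-filtered. -/
def WellFiltered (X : Type*) [TopologicalSpace X] : Prop :=
  ∀ S : Set (Set X), S.Nonempty →
    (∀ K ∈ S, K.Nonempty ∧ IsCompact K ∧ IsSaturatedSet K) →
    (∀ K₁ ∈ S, ∀ K₂ ∈ S, ∃ K₃ ∈ S, K₃ ⊆ K₁ ∩ K₂) →
    ∀ U : Set X, IsOpen U → ⋂₀ S ⊆ U → ∃ K ∈ S, K ⊆ U

lemma isSaturated_sInter {X : Type*} [TopologicalSpace X] {F : Set (Set X)}
    (h : ∀ A ∈ F, IsSaturatedSet A) : IsSaturatedSet (⋂₀ F) := by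
  apply Set.Subset.antisymm
  · exact fun x hx => Set.mem_sInter.2 fun U hU => hU.2 hx
  · intro x hx
    refine Set.mem_sInter.2 fun A hA => ?_
    rw [h A hA]
    refine Set.mem_sInter.2 fun U hU => ?_
    exact Set.mem_sInter.1 hx U ⟨hU.1, fun y hy => hU.2 (Set.mem_sInter.1 hy A hA)⟩

lemma finset_sInter_compact_sat {X : Type*} [TopologicalSpace X] (hcoh : CoherentSpace X)
    {S : Set (Set X)} (hS : ∀ K ∈ S, K.Nonempty ∧ IsCompact K ∧ IsSaturatedSet K)
    (T : Finset (Set X)) (hTne : T.Nonempty) (hTS : ↑T ⊆ S) :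
    IsCompact (⋂₀ (T : Set (Set X))) ∧ IsSaturatedSet (⋂₀ (T : Set (Set X))) := by
  classical
  induction T using Finset.induction with
  | empty => exact absurd hTne (by simp)
  | @insert K T hK ih =>
    have hKS : K ∈ S := hTS (by simp)
    have hTS' : ↑T ⊆ S := fun A hA => hTS (by simp [hA])
    rcases T.eq_empty_or_nonempty with h0 | h0
    · subst h0
      simpa using ⟨(hS K hKS).2.1, (hS K hKS).2.2⟩
    · obtain ⟨ihc, ihs⟩ := ih h0 hTS'
      have : (⋂₀ (↑(insert K T) : Set (Set X))) = K ∩ ⋂₀ (T : Set (Set X)) := by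
        simp [Set.sInter_insert]
      rw [this]
      constructor
      · exact hcoh K _ (hS K hKS).2.1 (hS K hKS).2.2 ihc ihs
      · rw [← Set.sInter_pair]
        exact isSaturated_sInter (by rintro A hA; rcases Set.mem_insert_iff.1 hA with h | h <;> subst h; exacts [(hS _ hKS).2.2, ihs])

/-- Every coherent well-filtered T₀-space is a strong R-space. -/
theorem coherent_wellFiltered_strongRSpace {X : Type*} [TopologicalSpace X] [T0Space X]
    (hcoh : CoherentSpace X) (hwf : WellFiltered X) : StrongRSpace X := by
  classical
  intro S hSne hS U hU hSU
  set F : Set (Set X) := {A | ∃ T : Finset (Set X), T.Nonempty ∧ ↑T ⊆ S ∧ A = ⋂₀ (T : Set (Set X))}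
    with hF
  by_cases hne : ∀ A ∈ F, A.Nonempty
  · obtain ⟨K₀, hK₀⟩ := hSne
    have hFne : F.Nonempty := ⟨K₀, {K₀}, by simp, by simp [hK₀], by simp⟩
    have hFprop : ∀ A ∈ F, A.Nonempty ∧ IsCompact A ∧ IsSaturatedSet A := by
      rintro A hA
      obtain ⟨T, hTne, hTS, rfl⟩ := hA
      exact ⟨hne _ ⟨T, hTne, hTS, rfl⟩, finset_sInter_compact_sat hcoh hS T hTne hTS⟩
    have hfilt : ∀ K₁ ∈ F, ∀ K₂ ∈ F, ∃ K₃ ∈ F, K₃ ⊆ K₁ ∩ K₂ := by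
      rintro K₁ ⟨T₁, h₁ne, h₁S, rfl⟩ K₂ ⟨T₂, h₂ne, h₂S, rfl⟩
      refine ⟨⋂₀ ((T₁ ∪ T₂ : Finset (Set X)) : Set (Set X)),
        ⟨T₁ ∪ T₂, Finset.Nonempty.inl h₁ne, ?_, rfl⟩, ?_⟩
      · intro A hA
        rcases Finset.mem_union.1 (by exact_mod_cast hA) with h | h
        exacts [h₁S h, h₂S h]
      · rw [Finset.coe_union, Set.sInter_union]
    have hFU : ⋂₀ F ⊆ U := by
      refine Set.Subset.trans (fun x hx => ?_) hSU
      refine Set.mem_sInter.2 fun K hK => ?_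
      have : K ∈ F := ⟨{K}, by simp, by simp [hK], by simp⟩
      simpa using Set.mem_sInter.1 hx K this
    obtain ⟨K, ⟨T, hTne, hTS, rfl⟩, hKU⟩ := hwf F hFne hFprop hfilt U hU hFU
    exact ⟨T, hTne, hTS, hKU⟩
  · push_neg at hne
    obtain ⟨A, ⟨T, hTne, hTS, rfl⟩, hAe⟩ := hne
    exact ⟨T, hTne, hTS, by rw [hAe]; exact Set.empty_subset U⟩
end
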